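/- arXiv:1211.1449 — 2 statements merged into one kernel-verified Lean document; each statement's English description precedes it below -/
import Mathlib

section
/- Let Q be a symmetric positive semidefinite real n×n matrix, let A be a real n×n matrix, b₀, q ∈ ℝⁿ, c ∈ ℝ. Then for every x ∈ ℝⁿ, inf over w ∈ ℝⁿ of (Ax+b₀+w)ᵀQ(Ax+b₀+w) + 2qᵀ(Ax+b₀+w) + c + ‖w‖² equals xᵀP_a x + 2P_bᵀx + P_c, where P_a = AᵀQ(I+Q)⁻¹A, P_b = Aᵀ(Q(I+Q)⁻¹b₀ + (I+Q)⁻¹q), and P_c = b₀ᵀQ(I+Q)⁻¹b₀ + 2qᵀ(I+Q)⁻¹b₀ + c − qᵀ(I+Q)⁻¹q. Moreover P_a is symmetric positive semidefinite. -/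
open Matrix

private lemma qcu_dot_swap {n : ℕ} (a : Fin n → ℝ) (N : Matrix (Fin n) (Fin n) ℝ)
    (b : Fin n → ℝ) : a ⬝ᵥ N *ᵥ b = b ⬝ᵥ Nᵀ *ᵥ a := by
  rw [dotProduct_mulVec, ← mulVec_transpose, dotProduct_comm]

private lemma qcu_mul_dot {n : ℕ} (N : Matrix (Fin n) (Fin n) ℝ)
    (a b : Fin n → ℝ) : (N *ᵥ a) ⬝ᵥ b = a ⬝ᵥ Nᵀ *ᵥ b := by
  rw [dotProduct_comm, qcu_dot_swap]

private lemma qcu_dot_self_nonneg {n : ℕ} (v : Fin n → ℝ) : 0 ≤ v ⬝ᵥ v :=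
  Finset.sum_nonneg fun _ _ => mul_self_nonneg _

/-- Explicit spatially invariant coefficient update for one quadratic term under
disturbance minimization: for every `x`,
`inf_w (Ax+b₀+w)ᵀQ(Ax+b₀+w) + 2qᵀ(Ax+b₀+w) + c + ‖w‖² = xᵀP_a x + 2P_bᵀx + P_c`,
with `P_a = AᵀQ(I+Q)⁻¹A`, `P_b = Aᵀ(Q(I+Q)⁻¹b₀ + (I+Q)⁻¹q)`,
`P_c = b₀ᵀQ(I+Q)⁻¹b₀ + 2qᵀ(I+Q)⁻¹b₀ + c − qᵀ(I+Q)⁻¹q`; and `P_a` is symmetric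
positive semidefinite. -/
theorem quadratic_coefficient_update
    {n : ℕ} (Q A : Matrix (Fin n) (Fin n) ℝ) (hQ : Q.PosSemidef)
    (b₀ q : Fin n → ℝ) (c : ℝ)
    (Pa : Matrix (Fin n) (Fin n) ℝ) (Pb : Fin n → ℝ) (Pc : ℝ)
    (hPa : Pa = Aᵀ * (Q * (1 + Q)⁻¹) * A)
    (hPb : Pb = Aᵀ *ᵥ ((Q * (1 + Q)⁻¹) *ᵥ b₀ + (1 + Q)⁻¹ *ᵥ q))
    (hPc : Pc = b₀ ⬝ᵥ (Q * (1 + Q)⁻¹) *ᵥ b₀ + 2 * (q ⬝ᵥ (1 + Q)⁻¹ *ᵥ b₀) + c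
        - q ⬝ᵥ (1 + Q)⁻¹ *ᵥ q) :
    Pa.PosSemidef ∧
    ∀ x : Fin n → ℝ,
      (⨅ w : Fin n → ℝ,
          (A *ᵥ x + b₀ + w) ⬝ᵥ Q *ᵥ (A *ᵥ x + b₀ + w)
            + 2 * (q ⬝ᵥ (A *ᵥ x + b₀ + w)) + c + w ⬝ᵥ w)
        = x ⬝ᵥ Pa *ᵥ x + 2 * (Pb ⬝ᵥ x) + Pc := by
  -- basic symmetry facts
  have hQs : Qᵀ = Q := by
    have := hQ.isHermitian
    rwa [IsHermitian, conjTranspose_eq_transpose_of_trivial] at this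
  -- M = 1 + Q is positive definite
  have hM : (1 + Q : Matrix (Fin n) (Fin n) ℝ).PosDef := by
    refine PosDef.of_dotProduct_mulVec_pos ?_ ?_
    · rw [IsHermitian, conjTranspose_eq_transpose_of_trivial, transpose_add,
        transpose_one, hQs]
    · intro y hy
      have h1 : (1 + Q) *ᵥ y = y + Q *ᵥ y := by rw [add_mulVec, one_mulVec]
      have h2 : (0:ℝ) ≤ y ⬝ᵥ Q *ᵥ y := by simpa using hQ.dotProduct_mulVec_nonneg y
      have h3 : (0:ℝ) < y ⬝ᵥ y :=
        lt_of_le_of_ne (qcu_dot_self_nonneg y)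
          (fun h => hy (dotProduct_self_eq_zero.mp h.symm))
      simp only [star_trivial, h1, dotProduct_add]
      linarith
  set M : Matrix (Fin n) (Fin n) ℝ := 1 + Q with hMdef
  set W : Matrix (Fin n) (Fin n) ℝ := M⁻¹ with hWdef
  have hMs : Mᵀ = M := by rw [hMdef, transpose_add, transpose_one, hQs]
  have hWs : Wᵀ = W := by rw [hWdef, transpose_nonsing_inv, hMs]
  have hdet : IsUnit M.det := isUnit_iff_isUnit_det _ |>.mp hM.isUnit
  have hMW : M * W = 1 := mul_nonsing_inv _ hdet
  have hWM : W * M = 1 := nonsing_inv_mul _ hdet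
  have hcomm : Q * W = W * Q := by
    have h1 : Q * M = M * Q := by rw [hMdef]; noncomm_ring
    have h2 : Q * W = W * M * Q * W := by rw [hWM, one_mul]
    rw [h2, mul_assoc W M Q, ← h1, ← mul_assoc W Q M, mul_assoc (W * Q) M W,
      hMW, mul_one]
  have hQWs : (Q * W)ᵀ = Q * W := by
    rw [transpose_mul, hQs, hWs, ← hcomm]
  -- key algebraic identities
  have key1 : Q * W + Q * W * Q = Q := by
    have h5 : Q * W * M = Q := by rw [mul_assoc, hWM, mul_one]
    calc Q * W + Q * W * Q = Q * W * M := by rw [hMdef]; noncomm_ring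
    _ = Q := h5
  have hQWplusW : Q * W + W = 1 := by
    calc Q * W + W = M * W := by rw [hMdef]; noncomm_ring
    _ = 1 := hMW
  -- positive semidefiniteness of Q * W
  have hQW_psd : (Q * W).PosSemidef := by
    have h1 : (W * Q * W).PosSemidef := by
      have := hQ.conjTranspose_mul_mul_same W
      rwa [conjTranspose_eq_transpose_of_trivial, hWs] at this
    have h2 : (Q * W * (W * Q)).PosSemidef := by
      have := posSemidef_conjTranspose_mul_self (W * Q)
      rwa [conjTranspose_eq_transpose_of_trivial, transpose_mul, hQs, hWs]
        at this
    have hWQWM : W * Q * W * M = W * Q := by rw [mul_assoc, hWM, mul_one]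
    have h3 : Q * W = W * Q * W + Q * W * (W * Q) := by
      calc Q * W = W * Q := hcomm
      _ = W * Q * W * M := hWQWM.symm
      _ = W * Q * W + W * Q * W * Q := by rw [hMdef]; noncomm_ring
      _ = W * Q * W + Q * W * (W * Q) := by
          congr 1
          calc W * Q * W * Q = W * Q * (W * Q) := by rw [mul_assoc]
          _ = Q * W * (W * Q) := congrArg (fun X => X * (W * Q)) hcomm.symm
    rw [h3]; exact h1.add h2
  have hPa_psd : Pa.PosSemidef := by
    rw [hPa]
    have := hQW_psd.conjTranspose_mul_mul_same A
    rwa [conjTranspose_eq_transpose_of_trivial] at this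
  refine ⟨hPa_psd, fun x => ?_⟩
  obtain ⟨z, hz⟩ : ∃ z, z = A *ᵥ x + b₀ := ⟨_, rfl⟩
  obtain ⟨v, hv⟩ : ∃ v, v = Q *ᵥ z + q := ⟨_, rfl⟩
  obtain ⟨u, hu⟩ : ∃ u, u = W *ᵥ v := ⟨_, rfl⟩
  -- u + Q u = v
  have huv : u + Q *ᵥ u = v := by
    have h9 : M *ᵥ u = v := by rw [hu, mulVec_mulVec, hMW, one_mulVec]
    rw [← h9, hMdef, add_mulVec, one_mulVec]
  -- matrix identities in subtraction form
  have hlin : (1 : Matrix (Fin n) (Fin n) ℝ) - Q * W = W := by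
    calc (1 : Matrix (Fin n) (Fin n) ℝ) - Q * W
        = (Q * W + W) - Q * W := by rw [hQWplusW]
    _ = W := by abel
  have h4 : Q - Q * W * Q = Q * W := by
    calc Q - Q * W * Q = (Q * W + Q * W * Q) - Q * W * Q := by rw [key1]
    _ = Q * W := by abel
  -- scalar building blocks
  have e1 : (Q *ᵥ z) ⬝ᵥ W *ᵥ (Q *ᵥ z) = z ⬝ᵥ (Q * W * Q) *ᵥ z := by
    rw [mulVec_mulVec, qcu_mul_dot, hQs, mulVec_mulVec, ← mul_assoc]
  have e2 : (Q *ᵥ z) ⬝ᵥ W *ᵥ q = z ⬝ᵥ (Q * W) *ᵥ q := by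
    rw [qcu_mul_dot, hQs, mulVec_mulVec]
  have e3 : q ⬝ᵥ W *ᵥ (Q *ᵥ z) = z ⬝ᵥ (Q * W) *ᵥ q := by
    rw [mulVec_mulVec, qcu_dot_swap, transpose_mul, hQs, hWs]
  have hvWv : v ⬝ᵥ W *ᵥ v
      = z ⬝ᵥ (Q * W * Q) *ᵥ z + 2 * (z ⬝ᵥ (Q * W) *ᵥ q) + q ⬝ᵥ W *ᵥ q := by
    rw [hv]
    simp only [add_dotProduct, mulVec_add, dotProduct_add]
    rw [e1, e2, e3]
    ring
  have ePa : x ⬝ᵥ Pa *ᵥ x = (A *ᵥ x) ⬝ᵥ (Q * W) *ᵥ (A *ᵥ x) := by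
    rw [hPa, ← mulVec_mulVec, ← mulVec_mulVec, qcu_dot_swap, transpose_transpose,
      qcu_mul_dot, hQWs]
  have cross : b₀ ⬝ᵥ (Q * W) *ᵥ (A *ᵥ x) = (A *ᵥ x) ⬝ᵥ (Q * W) *ᵥ b₀ := by
    rw [qcu_dot_swap, hQWs]
  have crossq : b₀ ⬝ᵥ W *ᵥ q = q ⬝ᵥ W *ᵥ b₀ := by
    rw [qcu_dot_swap, hWs]
  have crossq2 : q ⬝ᵥ W *ᵥ (A *ᵥ x) = (A *ᵥ x) ⬝ᵥ W *ᵥ q := by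
    rw [qcu_dot_swap, hWs]
  have ePb : Pb ⬝ᵥ x = (A *ᵥ x) ⬝ᵥ (Q * W) *ᵥ b₀ + (A *ᵥ x) ⬝ᵥ W *ᵥ q := by
    rw [dotProduct_comm, hPb, qcu_dot_swap, transpose_transpose,
      add_dotProduct, qcu_mul_dot, qcu_mul_dot, hQWs, hWs, cross, crossq2]
  have hq2 : q ⬝ᵥ z - z ⬝ᵥ (Q * W) *ᵥ q = z ⬝ᵥ W *ᵥ q := by
    have h7 : z ⬝ᵥ ((1 : Matrix (Fin n) (Fin n) ℝ) - Q * W) *ᵥ q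
        = z ⬝ᵥ W *ᵥ q := by rw [hlin]
    rw [sub_mulVec, one_mulVec, dotProduct_sub] at h7
    rw [dotProduct_comm q z]; exact h7
  have hz1 : z ⬝ᵥ Q *ᵥ z - z ⬝ᵥ (Q * W * Q) *ᵥ z = z ⬝ᵥ (Q * W) *ᵥ z := by
    have h8 : z ⬝ᵥ ((Q - Q * W * Q) *ᵥ z) = z ⬝ᵥ (Q * W) *ᵥ z := by rw [h4]
    rw [sub_mulVec, dotProduct_sub] at h8
    exact h8
  have hzexp : z ⬝ᵥ (Q * W) *ᵥ z
      = x ⬝ᵥ Pa *ᵥ x + 2 * ((A *ᵥ x) ⬝ᵥ (Q * W) *ᵥ b₀)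
        + b₀ ⬝ᵥ (Q * W) *ᵥ b₀ := by
    rw [hz]
    simp only [mulVec_add, add_dotProduct, dotProduct_add]
    rw [← ePa, cross]
    ring
  have hzWq : z ⬝ᵥ W *ᵥ q = (A *ᵥ x) ⬝ᵥ W *ᵥ q + q ⬝ᵥ W *ᵥ b₀ := by
    rw [hz, add_dotProduct, crossq]
  -- val in z form
  have hvalz : x ⬝ᵥ Pa *ᵥ x + 2 * (Pb ⬝ᵥ x) + Pc
      = z ⬝ᵥ Q *ᵥ z + 2 * (q ⬝ᵥ z) + c - v ⬝ᵥ W *ᵥ v := by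
    rw [hvWv, ePb, hPc]
    linarith [hq2, hz1, hzexp, hzWq]
  -- pointwise identity
  have step1 : ∀ w : Fin n → ℝ,
      (z + w) ⬝ᵥ Q *ᵥ (z + w) + 2 * (q ⬝ᵥ (z + w)) + c + w ⬝ᵥ w
      = (x ⬝ᵥ Pa *ᵥ x + 2 * (Pb ⬝ᵥ x) + Pc) + (w + u) ⬝ᵥ M *ᵥ (w + u) := by
    intro w
    have hMu : M *ᵥ (w + u) = (w + u) + (Q *ᵥ w + Q *ᵥ u) := by
      rw [hMdef, add_mulVec, one_mulVec, mulVec_add]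
    have huQw : u ⬝ᵥ Q *ᵥ w = w ⬝ᵥ Q *ᵥ u := by rw [qcu_dot_swap, hQs]
    have huw : u ⬝ᵥ w = w ⬝ᵥ u := dotProduct_comm _ _
    have hwv : w ⬝ᵥ u + w ⬝ᵥ Q *ᵥ u = w ⬝ᵥ Q *ᵥ z + w ⬝ᵥ q := by
      rw [← dotProduct_add, huv, hv, dotProduct_add]
    have huu : u ⬝ᵥ u + u ⬝ᵥ Q *ᵥ u = v ⬝ᵥ W *ᵥ v := by
      rw [← dotProduct_add, huv]
      rw [hu, qcu_mul_dot, hWs]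
    have hquad : (w + u) ⬝ᵥ M *ᵥ (w + u)
        = w ⬝ᵥ w + w ⬝ᵥ Q *ᵥ w + 2 * (w ⬝ᵥ Q *ᵥ z) + 2 * (w ⬝ᵥ q)
          + v ⬝ᵥ W *ᵥ v := by
      rw [hMu]
      simp only [dotProduct_add, add_dotProduct]
      linarith
    have hzw : z ⬝ᵥ Q *ᵥ w = w ⬝ᵥ Q *ᵥ z := by rw [qcu_dot_swap, hQs]
    have hqw : q ⬝ᵥ w = w ⬝ᵥ q := dotProduct_comm _ _
    rw [hvalz, hquad]
    simp only [mulVec_add, dotProduct_add, add_dotProduct]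
    rw [hzw, hqw]
    ring
  -- nonnegativity of the quadratic form
  have hnn : ∀ y : Fin n → ℝ, 0 ≤ y ⬝ᵥ M *ᵥ y := by
    intro y
    simpa using hM.posSemidef.dotProduct_mulVec_nonneg y
  simp only [← hz]
  have hle : ∀ w : Fin n → ℝ,
      x ⬝ᵥ Pa *ᵥ x + 2 * (Pb ⬝ᵥ x) + Pc ≤
      (z + w) ⬝ᵥ Q *ᵥ (z + w) + 2 * (q ⬝ᵥ (z + w)) + c + w ⬝ᵥ w := by
    intro w
    rw [step1 w]
    have := hnn (w + u)
    linarith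
  apply le_antisymm
  · have hbdd : BddBelow (Set.range fun w : Fin n → ℝ =>
        (z + w) ⬝ᵥ Q *ᵥ (z + w) + 2 * (q ⬝ᵥ (z + w)) + c + w ⬝ᵥ w) := by
      refine ⟨x ⬝ᵥ Pa *ᵥ x + 2 * (Pb ⬝ᵥ x) + Pc, ?_⟩
      rintro _ ⟨w, rfl⟩
      exact hle w
    calc _ ≤ _ := ciInf_le hbdd (-u)
    _ = x ⬝ᵥ Pa *ᵥ x + 2 * (Pb ⬝ᵥ x) + Pc := by
      rw [step1 (-u)]
      simp
  · exact le_ciInf hle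
end

section
/- Let V₁, V₂ : ℝⁿ → ℝ be bounded below, and define for a function V the operator S[V](x) = inf over w ∈ ℝⁿ and λ in the standard simplex of ℝ^M of [ V(Ax + b₀ + w) + ‖w‖² + Σ_j λ_j (y_j − C_j x)ᵀH(y_j − C_j x) ], where A is a real n×n matrix, b₀ ∈ ℝⁿ, H is a symmetric positive semidefinite p×p matrix, C_j are p×n matrices and y_j ∈ ℝᵖ for j ∈ Fin M. Then for all x ∈ ℝⁿ, S[min(V₁, V₂)](x) = min( S[V₁](x), S[V₂](x) ), where min(V₁,V₂) denotes the pointwise minimum. -/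
open Matrix

private lemma ciInf_min_eq {ι : Sort*} (f g : ι → ℝ)
    (hf : BddBelow (Set.range f)) (hg : BddBelow (Set.range g)) :
    ⨅ i, min (f i) (g i) = min (⨅ i, f i) (⨅ i, g i) := by
  rcases isEmpty_or_nonempty ι with h | h
  · simp [Real.iInf_of_isEmpty]
  · obtain ⟨bf, hbf⟩ := hf
    obtain ⟨bg, hbg⟩ := hg
    have hbf' : ∀ i, bf ≤ f i := fun i => hbf (Set.mem_range_self i)
    have hbg' : ∀ i, bg ≤ g i := fun i => hbg (Set.mem_range_self i)
    have hmin : BddBelow (Set.range fun i => min (f i) (g i)) := by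
      refine ⟨min bf bg, ?_⟩
      rintro _ ⟨i, rfl⟩
      exact min_le_min (hbf' i) (hbg' i)
    apply le_antisymm
    · exact le_min (ciInf_mono hmin fun i => min_le_left _ _)
        (ciInf_mono hmin fun i => min_le_right _ _)
    · exact le_ciInf fun i =>
        min_le_min (ciInf_le ⟨bf, hbf⟩ i) (ciInf_le ⟨bg, hbg⟩ i)

/-- Min-plus linearity of the dynamic programming operator: for `V₁, V₂` bounded
below, `S[min(V₁,V₂)](x) = min(S[V₁](x), S[V₂](x))` for all `x`. -/
theorem dp_operator_minplus_linear
    {n p M : ℕ}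
    (A : Matrix (Fin n) (Fin n) ℝ) (b₀ : Fin n → ℝ)
    (H : Matrix (Fin p) (Fin p) ℝ) (hH : H.PosSemidef)
    (C : Fin M → Matrix (Fin p) (Fin n) ℝ) (y : Fin M → Fin p → ℝ)
    (S : ((Fin n → ℝ) → ℝ) → (Fin n → ℝ) → ℝ)
    (hS : ∀ (V : (Fin n → ℝ) → ℝ) (x : Fin n → ℝ), S V x =
      ⨅ w : Fin n → ℝ, ⨅ l ∈ stdSimplex ℝ (Fin M),
        V (A *ᵥ x + b₀ + w) + w ⬝ᵥ w
          + ∑ j, l j * ((y j - C j *ᵥ x) ⬝ᵥ H *ᵥ (y j - C j *ᵥ x)))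
    (V₁ V₂ : (Fin n → ℝ) → ℝ)
    (m₁ m₂ : ℝ) (hV₁ : ∀ x, m₁ ≤ V₁ x) (hV₂ : ∀ x, m₂ ≤ V₂ x) :
    ∀ x : Fin n → ℝ,
      S (fun z => min (V₁ z) (V₂ z)) x = min (S V₁ x) (S V₂ x) := by
  intro x
  rw [hS, hS, hS]
  set s := stdSimplex ℝ (Fin M) with hs
  -- abbreviations
  set Q : (Fin M → ℝ) → ℝ :=
    fun l => ∑ j, l j * ((y j - C j *ᵥ x) ⬝ᵥ H *ᵥ (y j - C j *ᵥ x)) with hQ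
  set F : ((Fin n → ℝ) → ℝ) → (Fin n → ℝ) → (Fin M → ℝ) → ℝ :=
    fun V w l => V (A *ᵥ x + b₀ + w) + w ⬝ᵥ w + Q l with hF
  have hQnn : ∀ l ∈ s, 0 ≤ Q l := by
    intro l hl
    refine Finset.sum_nonneg fun j _ => mul_nonneg (hl.1 j) ?_
    simpa using hH.dotProduct_mulVec_nonneg (y j - C j *ᵥ x)
  have hwnn : ∀ w : Fin n → ℝ, 0 ≤ w ⬝ᵥ w := fun w =>
    Finset.sum_nonneg fun i _ => mul_self_nonneg _
  -- lower bounds on F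
  have hFlb : ∀ (V : (Fin n → ℝ) → ℝ) (m : ℝ), (∀ z, m ≤ V z) →
      ∀ w, ∀ l ∈ s, m ≤ F V w l := by
    intro V m hV w l hl
    have := add_le_add (add_le_add (hV (A *ᵥ x + b₀ + w)) (hwnn w)) (hQnn l hl)
    simpa using this.trans_eq' (by ring)
  -- bound on inner Prop-indexed infimum
  have hG : ∀ (V : (Fin n → ℝ) → ℝ) (m : ℝ), (∀ z, m ≤ V z) →
      ∀ w l, min m 0 ≤ ⨅ _ : l ∈ s, F V w l := by
    intro V m hV w l
    by_cases hl : l ∈ s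
    · rw [ciInf_pos hl]
      exact (min_le_left _ _).trans (hFlb V m hV w l hl)
    · rw [ciInf_neg hl]
      simp [Real.sInf_empty]
  have step1 : ∀ w l, (⨅ _ : l ∈ s, min (F V₁ w l) (F V₂ w l))
      = min (⨅ _ : l ∈ s, F V₁ w l) (⨅ _ : l ∈ s, F V₂ w l) := by
    intro w l
    refine ciInf_min_eq _ _ ⟨F V₁ w l, ?_⟩ ⟨F V₂ w l, ?_⟩ <;>
      · rintro _ ⟨h, rfl⟩; exact le_rfl
  have step2 : ∀ w, (⨅ l, min (⨅ _ : l ∈ s, F V₁ w l) (⨅ _ : l ∈ s, F V₂ w l))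
      = min (⨅ l, ⨅ _ : l ∈ s, F V₁ w l) (⨅ l, ⨅ _ : l ∈ s, F V₂ w l) := by
    intro w
    refine ciInf_min_eq _ _ ⟨min m₁ 0, ?_⟩ ⟨min m₂ 0, ?_⟩
    · rintro _ ⟨l, rfl⟩; exact hG V₁ m₁ hV₁ w l
    · rintro _ ⟨l, rfl⟩; exact hG V₂ m₂ hV₂ w l
  have hGlb : ∀ (V : (Fin n → ℝ) → ℝ) (m : ℝ), (∀ z, m ≤ V z) →
      ∀ w, min m 0 ≤ ⨅ l, ⨅ _ : l ∈ s, F V w l :=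
    fun V m hV w => le_ciInf fun l => hG V m hV w l
  have step3 : (⨅ w, min (⨅ l, ⨅ _ : l ∈ s, F V₁ w l) (⨅ l, ⨅ _ : l ∈ s, F V₂ w l))
      = min (⨅ w, ⨅ l, ⨅ _ : l ∈ s, F V₁ w l) (⨅ w, ⨅ l, ⨅ _ : l ∈ s, F V₂ w l) := by
    refine ciInf_min_eq _ _ ⟨min m₁ 0, ?_⟩ ⟨min m₂ 0, ?_⟩
    · rintro _ ⟨w, rfl⟩; exact hGlb V₁ m₁ hV₁ w
    · rintro _ ⟨w, rfl⟩; exact hGlb V₂ m₂ hV₂ w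
  calc (⨅ w, ⨅ l ∈ s, (min (V₁ (A *ᵥ x + b₀ + w)) (V₂ (A *ᵥ x + b₀ + w)) + w ⬝ᵥ w + Q l))
      = ⨅ w, ⨅ l, ⨅ _ : l ∈ s, min (F V₁ w l) (F V₂ w l) := by
        simp only [hF, min_add_add_right]
    _ = ⨅ w, ⨅ l, min (⨅ _ : l ∈ s, F V₁ w l) (⨅ _ : l ∈ s, F V₂ w l) := by
        exact iInf_congr fun w => iInf_congr fun l => step1 w l
    _ = ⨅ w, min (⨅ l, ⨅ _ : l ∈ s, F V₁ w l) (⨅ l, ⨅ _ : l ∈ s, F V₂ w l) :=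
        iInf_congr step2
    _ = min (⨅ w, ⨅ l, ⨅ _ : l ∈ s, F V₁ w l) (⨅ w, ⨅ l, ⨅ _ : l ∈ s, F V₂ w l) := step3
end
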